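/- Fix β > 0 and ρ > ρ_c(β) := sup_{μ<0} I(β,μ), where I(β,μ) = (2π)^{-3} ∫_{ℝ³}(e^{β(|k|²-μ)}-1)^{-1} dk. For each η ≠ 0 the equation ρ = I(β,μ) + |η|²/μ² has a unique solution μ(β,ρ,η) < 0, and as η → 0 one has μ(β,ρ,η) → 0 and |η|²/μ(β,ρ,η)² → ρ - ρ_c(β). -/

import Mathlib

open Filter Topology

/-- Condensate equation with symmetry-breaking source: for `ρ > ρ_c` and each
`η ≠ 0` the equation `ρ = I(μ) + |η|²/μ²` has a unique negative solution, and
as `η → 0` the solution tends to `0` while `|η|²/μ² → ρ - ρ_c`. -/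
theorem condensate_equation_supercritical
    (β ρ ρc : ℝ) (I : ℝ → ℝ)
    (hIc : ContinuousOn I (Set.Iio 0)) (hImono : StrictMonoOn I (Set.Iio 0))
    (hI0 : Tendsto I (𝓝[<] 0) (𝓝 ρc)) (hIbot : Tendsto I atBot (𝓝 0))
    (hρ : ρc < ρ) :
    (∀ η : ℂ, η ≠ 0 → ∃! μ : ℝ, μ < 0 ∧ ρ = I μ + ‖η‖ ^ 2 / μ ^ 2) ∧
    ∀ μsol : ℂ → ℝ,
      (∀ η : ℂ, η ≠ 0 → μsol η < 0 ∧ ρ = I (μsol η) + ‖η‖ ^ 2 / (μsol η) ^ 2) →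
      Tendsto μsol (𝓝[≠] (0:ℂ)) (𝓝 0) ∧
      Tendsto (fun η => ‖η‖ ^ 2 / (μsol η) ^ 2) (𝓝[≠] (0:ℂ)) (𝓝 (ρ - ρc)) := by
  -- basic facts
  have hInn : ∀ μ : ℝ, μ < 0 → 0 ≤ I μ := by
    intro μ hμ
    refine le_of_tendsto hIbot ?_
    filter_upwards [eventually_le_atBot (μ - 1)] with x hx
    exact (hImono (show x ∈ Set.Iio 0 by simp; linarith)
      (show μ ∈ Set.Iio 0 from hμ) (by linarith)).le
  have hIle : ∀ μ : ℝ, μ < 0 → I μ ≤ ρc := by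
    intro μ hμ
    refine ge_of_tendsto hI0 ?_
    filter_upwards [Ioo_mem_nhdsLT hμ] with x hx
    exact (hImono (show μ ∈ Set.Iio 0 from hμ)
      (show x ∈ Set.Iio 0 from hx.2) hx.1).le
  have hρc0 : 0 ≤ ρc := le_trans (hInn (-1) (by norm_num)) (hIle (-1) (by norm_num))
  have hρpos : 0 < ρ := lt_of_le_of_lt hρc0 hρ
  have hsub : 0 < ρ - ρc := by linarith
  constructor
  · -- existence and uniqueness
    intro η hη
    set c : ℝ := ‖η‖ ^ 2 with hc_def
    have hc : 0 < c := by
      have : 0 < ‖η‖ := norm_pos_iff.mpr hη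
      positivity
    set F : ℝ → ℝ := fun μ => I μ + c / μ ^ 2 with hF_def
    have hFmono : StrictMonoOn F (Set.Iio 0) := by
      intro x hx y hy hxy
      have hx0 : x < 0 := hx
      have hy0 : y < 0 := hy
      have h1 : I x < I y := hImono hx hy hxy
      have h2 : c / x ^ 2 < c / y ^ 2 :=
        div_lt_div_of_pos_left hc (by nlinarith) (by nlinarith)
      simp only [hF_def]
      linarith
    -- choose endpoints for IVT
    set b : ℝ := -Real.sqrt (c / ρ) with hb_def
    have hcρ : 0 < c / ρ := div_pos hc hρpos
    have hb0 : b < 0 := by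
      simp only [hb_def, neg_neg, neg_lt, neg_zero]
      exact Real.sqrt_pos.mpr hcρ
    have hbsq : b ^ 2 = c / ρ := by
      simp only [hb_def, even_two.neg_pow]
      exact Real.sq_sqrt hcρ.le
    have hbval : c / b ^ 2 = ρ := by
      rw [hbsq]
      field_simp
    set a : ℝ := min b (-Real.sqrt (c / (ρ - ρc))) - 1 with ha_def
    have hab : a < b := by
      have := min_le_left b (-Real.sqrt (c / (ρ - ρc)))
      simp only [ha_def]; linarith
    have ha0 : a < 0 := lt_trans hab hb0
    have hasq : c / (ρ - ρc) < a ^ 2 := by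
      have h1 : a < -Real.sqrt (c / (ρ - ρc)) := by
        have := min_le_right b (-Real.sqrt (c / (ρ - ρc)))
        simp only [ha_def]; linarith
      have h2 : 0 ≤ Real.sqrt (c / (ρ - ρc)) := Real.sqrt_nonneg _
      have h3 : Real.sqrt (c / (ρ - ρc)) ^ 2 = c / (ρ - ρc) := by
        rw [pow_two, Real.mul_self_sqrt (le_of_lt (div_pos hc hsub))]
      nlinarith
    have haF : F a < ρ := by
      have h1 : I a ≤ ρc := hIle a ha0
      have h2 : c / a ^ 2 < ρ - ρc := by
        rw [div_lt_iff₀ (by nlinarith : (0:ℝ) < a ^ 2)]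
        have := (div_lt_iff₀ hsub).mp hasq
        nlinarith
      simp only [hF_def]
      linarith
    have hbF : ρ ≤ F b := by
      have h1 : 0 ≤ I b := hInn b hb0
      simp only [hF_def, hbval]
      linarith
    have hIccsub : Set.Icc a b ⊆ Set.Iio 0 := fun x hx => lt_of_le_of_lt hx.2 hb0
    have hFc : ContinuousOn F (Set.Icc a b) := by
      apply ContinuousOn.add (hIc.mono hIccsub)
      apply ContinuousOn.div continuousOn_const (continuous_pow 2).continuousOn
      intro x hx
      exact pow_ne_zero 2 (ne_of_lt (hIccsub hx))
    have hmem : ρ ∈ Set.Icc (F a) (F b) := ⟨haF.le, hbF⟩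
    obtain ⟨μ, hμmem, hμval⟩ := intermediate_value_Icc hab.le hFc hmem
    have hμ0 : μ < 0 := hIccsub hμmem
    refine ⟨μ, ⟨hμ0, ?_⟩, ?_⟩
    · have : F μ = I μ + c / μ ^ 2 := by simp only [hF_def]
      rw [← this, hμval]
    · rintro y ⟨hy0, hyval⟩
      have hFy : F y = ρ := by simp only [hF_def]; linarith [hyval]
      exact hFmono.injOn (show y ∈ Set.Iio 0 from hy0)
        (show μ ∈ Set.Iio 0 from hμ0) (hFy.trans hμval.symm)
  · -- limits as η → 0
    intro μsol hμsol
    have hkey : ∀ η : ℂ, η ≠ 0 → ‖η‖ ^ 2 = (ρ - I (μsol η)) * (μsol η) ^ 2 := by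
      intro η hη
      obtain ⟨h1, h2⟩ := hμsol η hη
      have hμsq : (0:ℝ) < (μsol η) ^ 2 := by nlinarith
      have : ‖η‖ ^ 2 / (μsol η) ^ 2 = ρ - I (μsol η) := by linarith
      rw [← this, div_mul_cancel₀ _ hμsq.ne']
    have htend0 : Tendsto μsol (𝓝[≠] (0:ℂ)) (𝓝 0) := by
      rw [Metric.tendsto_nhds]
      intro ε hε
      have hev : ∀ᶠ η in 𝓝 (0:ℂ), ‖η‖ ^ 2 < (ρ - ρc) * ε ^ 2 := by
        have htn : Tendsto (fun η : ℂ => ‖η‖ ^ 2) (𝓝 0) (𝓝 0) := by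
          have := (continuous_norm.pow 2).tendsto (0:ℂ)
          have h0 : ((fun a : ℂ => ‖a‖) ^ 2) 0 = 0 := by simp
          rw [h0] at this; exact this
        exact htn.eventually_lt_const (by positivity)
      filter_upwards [eventually_nhdsWithin_of_eventually_nhds hev,
        self_mem_nhdsWithin] with η h1 h2
      have h3 : μsol η < 0 := (hμsol η h2).1
      have h4 := hkey η h2
      have h5 : I (μsol η) ≤ ρc := hIle _ h3
      rw [Real.dist_eq, sub_zero]
      rw [abs_lt]
      constructor
      · by_contra h
        push_neg at h
        have h6 : μsol η ≤ -ε := h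
        have h7 : ε ^ 2 ≤ (μsol η) ^ 2 := by nlinarith
        have h8 : (ρ - ρc) * ε ^ 2 ≤ (ρ - I (μsol η)) * (μsol η) ^ 2 := by nlinarith
        linarith
      · linarith
    have htendIn : Tendsto μsol (𝓝[≠] (0:ℂ)) (𝓝[<] (0:ℝ)) := by
      rw [tendsto_nhdsWithin_iff]
      refine ⟨htend0, ?_⟩
      filter_upwards [self_mem_nhdsWithin] with η hη
      exact (hμsol η hη).1
    refine ⟨htend0, ?_⟩
    have hItend : Tendsto (fun η => I (μsol η)) (𝓝[≠] (0:ℂ)) (𝓝 ρc) :=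
      hI0.comp htendIn
    have h1 : Tendsto (fun η => ρ - I (μsol η)) (𝓝[≠] (0:ℂ)) (𝓝 (ρ - ρc)) :=
      tendsto_const_nhds.sub hItend
    refine Tendsto.congr' ?_ h1
    filter_upwards [self_mem_nhdsWithin] with η hη
    obtain ⟨h2, h3⟩ := hμsol η hη
    linarith
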